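/- If R is n-rigid for every n ≥ 1 and A is an associative ring that is a free R-module of finite positive rank (a finite-dimensional R-algebra), then A is n-rigid for every n ≥ 1. -/

import Mathlib

/-- A ring `R` is `n`-rigid if every homomorphism of right `R`-modules
`Rⁿ → Rⁿ⁻¹` has infinite kernel (right modules as left `Rᵐᵒᵖ`-modules). -/
def IsRigid (R : Type*) [Ring R] (n : ℕ) : Prop :=
  ∀ f : (Fin n → R) →ₗ[Rᵐᵒᵖ] (Fin (n - 1) → R),
    (LinearMap.ker f : Set (Fin n → R)).Infinite

/-- If `R` is `n`-rigid for every `n ≥ 1` and `A` is an associative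
ring which is a free `R`-module of finite positive rank (a finite-dimensional
`R`-algebra), then `A` is `n`-rigid for every `n ≥ 1`. -/
theorem isRigid_of_finite_free_algebra (R A : Type*) [CommRing R] [Ring A]
    [Algebra R A] [Module.Free R A] [Module.Finite R A]
    (hrank : 0 < Module.finrank R A)
    (hR : ∀ n : ℕ, 1 ≤ n → IsRigid R n) :
    ∀ n : ℕ, 1 ≤ n → IsRigid A n := by
  intro n hn f
  rcases subsingleton_or_nontrivial R with hs | hnt
  · exact absurd (hR 1 le_rfl 0) (Set.not_infinite.mpr (Set.toFinite _))
  set d := Module.finrank R A with hd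
  have hd1 : 0 < d := hrank
  let b : Module.Basis (Fin d) R A := Module.finBasis R A
  -- transport f to an R-linear map
  let F : (Fin n → A) →ₗ[R] (Fin (n - 1) → A) :=
  { toFun := f
    map_add' := f.map_add
    map_smul' := by
      intro r x
      show f (r • x) = r • f x
      have key : ∀ (k : ℕ) (y : Fin k → A),
          r • y = (MulOpposite.op (algebraMap R A r)) • y := by
        intro k y; funext i
        simp [MulOpposite.smul_eq_mul_unop, Algebra.smul_def, Algebra.commutes]
      rw [key n x, f.map_smul, ← key (n-1) (f x)] }
  let e1 : (Fin n → A) ≃ₗ[R] (Fin (n * d) → R) :=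
    (LinearEquiv.piCongrRight fun _ => b.equivFun) ≪≫ₗ
      (LinearEquiv.curry R R (Fin n) (Fin d)).symm ≪≫ₗ
      LinearEquiv.funCongrLeft R R finProdFinEquiv.symm
  let e2 : (Fin (n - 1) → A) ≃ₗ[R] (Fin ((n - 1) * d) → R) :=
    (LinearEquiv.piCongrRight fun _ => b.equivFun) ≪≫ₗ
      (LinearEquiv.curry R R (Fin (n - 1)) (Fin d)).symm ≪≫ₗ
      LinearEquiv.funCongrLeft R R finProdFinEquiv.symm
  let g : (Fin (n * d) → R) →ₗ[R] (Fin ((n - 1) * d) → R) :=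
    (e2.toLinearMap ∘ₗ F) ∘ₗ e1.symm.toLinearMap
  have hle : (n - 1) * d ≤ n * d - 1 := by
    rw [Nat.sub_one_mul]
    exact Nat.sub_le_sub_left hd1 _
  let ι : (Fin ((n - 1) * d) → R) →ₗ[R] (Fin (n * d - 1) → R) :=
  { toFun := fun x j => if hj : (j : ℕ) < (n - 1) * d then x ⟨j, hj⟩ else 0
    map_add' := by
      intro x y; funext j
      by_cases hj : (j : ℕ) < (n - 1) * d <;> simp [hj]
    map_smul' := by
      intro c x; funext j
      by_cases hj : (j : ℕ) < (n - 1) * d <;> simp [hj] }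
  have hι : Function.Injective ι := by
    intro x y hxy
    funext i
    have h2 := congrFun hxy (Fin.castLE hle i)
    simpa [ι, i.isLt] using h2
  let h : (Fin (n * d) → R) →ₗ[R] (Fin (n * d - 1) → R) := ι ∘ₗ g
  let h' : (Fin (n * d) → R) →ₗ[Rᵐᵒᵖ] (Fin (n * d - 1) → R) :=
  { toFun := h
    map_add' := h.map_add
    map_smul' := by
      intro r x
      show h (r • x) = r • h x
      have key : ∀ (k : ℕ) (y : Fin k → R), r • y = r.unop • y := by
        intro k y; funext i
        simp [MulOpposite.smul_eq_mul_unop, mul_comm]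
      rw [key _ x, h.map_smul, ← key _ (h x)] }
  have hker : (LinearMap.ker h' : Set (Fin (n * d) → R)).Infinite :=
    hR (n * d) (Nat.mul_pos hn hd1) h'
  have hFf : ∀ x, F x = f x := fun _ => rfl
  have hset : (LinearMap.ker f : Set (Fin n → A)) =
      ⇑e1 ⁻¹' (LinearMap.ker h' : Set (Fin (n * d) → R)) := by
    ext x
    simp only [Set.mem_preimage, SetLike.mem_coe, LinearMap.mem_ker]
    have hh : h' (e1 x) = ι (e2 (f x)) := by
      show ι (g (e1 x)) = _
      simp only [g, LinearMap.comp_apply, LinearEquiv.coe_coe, e1.symm_apply_apply]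
      rw [hFf]
    constructor
    · intro hx
      rw [hh, hx]
      simp
    · intro hx
      rw [hh] at hx
      have h3 : e2 (f x) = 0 := hι (by simpa using hx)
      simpa using h3
  rw [hset]
  exact hker.preimage (by simp [e1.surjective.range_eq])
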